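/- Let (X,d) be a Polish metric space, p ≥ 1, and G a group of surjective isometries of X; write W_p for the p-th Wasserstein distance and D_p(μ,ν) := inf_{g ∈ G} W_p(g_#μ, ν) for the shape distance. Let (μ_t)_{t ∈ [0,1]} be a constant-speed geodesic in the p-th Wasserstein space (i.e. W_p(μ_s, μ_t) = |s − t| · W_p(μ_0, μ_1) for all s, t ∈ [0,1]) such that D_p(μ_0, μ_1) = W_p(μ_0, μ_1) ≠ 0. Then the projected curve is a constant-speed geodesic for the shape distance: D_p(μ_s, μ_t) = |s − t| · D_p(μ_0, μ_1) for all s, t ∈ [0,1]. -/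

import Mathlib

open MeasureTheory ENNReal Set
open scoped ProbabilityTheory

noncomputable section

/-- The set of admissible couplings of two measures. -/
def Adm {X : Type*} [MeasurableSpace X] (μ ν : Measure X) : Set (Measure (X × X)) :=
  {π | IsProbabilityMeasure π ∧ π.map Prod.fst = μ ∧ π.map Prod.snd = ν}

/-- The `p`-th Wasserstein distance. -/
def Wp {X : Type*} [MeasurableSpace X] [PseudoEMetricSpace X] (p : ℝ) (μ ν : Measure X) :
    ℝ≥0∞ :=
  (⨅ π ∈ Adm μ ν, ∫⁻ z : X × X, edist z.1 z.2 ^ p ∂π) ^ (1 / p)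

/-- Finite `p`-th moment. -/
def HasFinitePMoment {X : Type*} [MeasurableSpace X] [PseudoEMetricSpace X] (p : ℝ)
    (μ : Measure X) : Prop :=
  ∃ x₀ : X, ∫⁻ x, edist x x₀ ^ p ∂μ ≠ ⊤

/-- Shape distance for a subgroup `G` of the isometry group. -/
def Dp {X : Type*} [MeasurableSpace X] [MetricSpace X] (G : Subgroup (X ≃ᵢ X)) (p : ℝ)
    (μ ν : Measure X) : ℝ≥0∞ :=
  ⨅ g : G, Wp p (μ.map ((g : X ≃ᵢ X) : X → X)) ν

section Aux

lemma rpow_iInf' {ι : Sort*} (f : ι → ℝ≥0∞) {c : ℝ} (hc : 0 < c) :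
    (⨅ i, f i) ^ c = ⨅ i, f i ^ c := by
  have h := (ENNReal.orderIsoRpow c hc).map_iInf f
  simp only [ENNReal.orderIsoRpow_apply] at h
  exact h

set_option linter.unusedSectionVars false

variable {X : Type*} [MeasurableSpace X] [MetricSpace X] [BorelSpace X]
  [SecondCountableTopology X] {p : ℝ}

lemma medp : Measurable (fun z : X × X => edist z.1 z.2 ^ p) :=
  ((continuous_fst.edist continuous_snd).measurable).pow measurable_const

lemma wp_le_coupling (hp : 1 ≤ p) {μ ν : Measure X} {π : Measure (X × X)} (hπ : π ∈ Adm μ ν) :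
    Wp p μ ν ≤ (∫⁻ z : X × X, edist z.1 z.2 ^ p ∂π) ^ (1 / p) :=
  ENNReal.rpow_le_rpow (iInf₂_le π hπ) (by positivity)

lemma wp_mono_aux (hp : 1 ≤ p) {μ ν μ' ν' : Measure X}
    (h : ∀ π ∈ Adm μ' ν', ∃ π' ∈ Adm μ ν,
      (∫⁻ z : X × X, edist z.1 z.2 ^ p ∂π') ≤ ∫⁻ z : X × X, edist z.1 z.2 ^ p ∂π) :
    Wp p μ ν ≤ Wp p μ' ν' := by
  refine ENNReal.rpow_le_rpow ?_ (by positivity)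
  refine le_iInf₂ fun π hπ => ?_
  obtain ⟨π', hπ', hle⟩ := h π hπ
  exact iInf₂_le_of_le π' hπ' hle

lemma adm_swap {μ ν : Measure X} {π : Measure (X × X)} (hπ : π ∈ Adm μ ν) :
    π.map Prod.swap ∈ Adm ν μ := by
  obtain ⟨hP, hf, hs⟩ := hπ
  haveI := hP
  refine ⟨Measure.isProbabilityMeasure_map measurable_swap.aemeasurable, ?_, ?_⟩
  · rw [Measure.map_map measurable_fst measurable_swap]; exact hs
  · rw [Measure.map_map measurable_snd measurable_swap]; exact hf

lemma wp_comm (hp : 1 ≤ p) (μ ν : Measure X) : Wp p μ ν = Wp p ν μ := by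
  have key : ∀ μ ν : Measure X, Wp p ν μ ≤ Wp p μ ν := by
    intro μ ν
    refine wp_mono_aux hp fun π hπ => ⟨π.map Prod.swap, adm_swap hπ, le_of_eq ?_⟩
    rw [lintegral_map medp measurable_swap]
    simp_rw [Prod.fst_swap, Prod.snd_swap, edist_comm]
  exact le_antisymm (key ν μ) (key μ ν)

lemma wp_map_le (hp : 1 ≤ p) (g : X ≃ᵢ X) (μ ν : Measure X) :
    Wp p (μ.map g) (ν.map g) ≤ Wp p μ ν := by
  have hg : Measurable (g : X → X) := g.continuous.measurable
  have hgg : Measurable (Prod.map (g : X → X) g) := hg.prodMap hg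
  refine wp_mono_aux hp fun π hπ => ⟨π.map (Prod.map (g : X → X) g), ?_, le_of_eq ?_⟩
  · obtain ⟨hP, hf, hs⟩ := hπ
    haveI := hP
    refine ⟨Measure.isProbabilityMeasure_map hgg.aemeasurable, ?_, ?_⟩
    · rw [Measure.map_map measurable_fst hgg, show Prod.fst ∘ Prod.map (g : X → X) g =
        (g : X → X) ∘ Prod.fst from rfl, ← Measure.map_map hg measurable_fst, hf]
    · rw [Measure.map_map measurable_snd hgg, show Prod.snd ∘ Prod.map (g : X → X) g =
        (g : X → X) ∘ Prod.snd from rfl, ← Measure.map_map hg measurable_snd, hs]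
  · rw [lintegral_map medp hgg]
    simp_rw [Prod.map_fst, Prod.map_snd, g.isometry.edist_eq]

lemma map_symm_map (g : X ≃ᵢ X) (μ : Measure X) : (μ.map g).map g.symm = μ := by
  rw [Measure.map_map g.symm.continuous.measurable g.continuous.measurable,
    show (⇑g.symm ∘ ⇑g) = id from funext g.symm_apply_apply, Measure.map_id]

lemma wp_map (hp : 1 ≤ p) (g : X ≃ᵢ X) (μ ν : Measure X) :
    Wp p (μ.map g) (ν.map g) = Wp p μ ν := by
  refine le_antisymm (wp_map_le hp g μ ν) ?_
  have := wp_map_le hp g.symm (μ.map g) (ν.map g)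
  rwa [map_symm_map, map_symm_map] at this


open ProbabilityTheory in
lemma map_compProd_prod_fst {α β γ : Type*} [MeasurableSpace α] [MeasurableSpace β]
    [MeasurableSpace γ] (κ : Measure α) [SFinite κ] (K₁ : Kernel α β) (K₂ : Kernel α γ)
    [IsMarkovKernel K₁] [IsMarkovKernel K₂] :
    (κ ⊗ₘ (K₁ ×ₖ K₂)).map (fun z => (z.1, z.2.1)) = κ ⊗ₘ K₁ := by
  have hφ : Measurable (fun z : α × β × γ => (z.1, z.2.1)) :=
    measurable_fst.prodMk (measurable_fst.comp measurable_snd)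
  ext s hs
  rw [Measure.map_apply hφ hs, Measure.compProd_apply (hφ hs), Measure.compProd_apply hs]
  refine lintegral_congr fun a => ?_
  rw [Kernel.prod_apply]
  have hset : (Prod.mk a ⁻¹' ((fun z : α × β × γ => (z.1, z.2.1)) ⁻¹' s))
      = (Prod.mk a ⁻¹' s) ×ˢ univ := by
    ext bc; simp [Set.mem_prod]
  rw [hset, Measure.prod_prod, measure_univ, mul_one]

open ProbabilityTheory in
lemma map_compProd_prod_snd {α β γ : Type*} [MeasurableSpace α] [MeasurableSpace β]
    [MeasurableSpace γ] (κ : Measure α) [SFinite κ] (K₁ : Kernel α β) (K₂ : Kernel α γ)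
    [IsMarkovKernel K₁] [IsMarkovKernel K₂] :
    (κ ⊗ₘ (K₁ ×ₖ K₂)).map (fun z => (z.1, z.2.2)) = κ ⊗ₘ K₂ := by
  have hφ : Measurable (fun z : α × β × γ => (z.1, z.2.2)) :=
    measurable_fst.prodMk (measurable_snd.comp measurable_snd)
  ext s hs
  rw [Measure.map_apply hφ hs, Measure.compProd_apply (hφ hs), Measure.compProd_apply hs]
  refine lintegral_congr fun a => ?_
  rw [Kernel.prod_apply]
  have hset : (Prod.mk a ⁻¹' ((fun z : α × β × γ => (z.1, z.2.2)) ⁻¹' s))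
      = univ ×ˢ (Prod.mk a ⁻¹' s) := by
    ext bc; simp [Set.mem_prod]
  rw [hset, Measure.prod_prod, measure_univ, one_mul]

open ProbabilityTheory in
lemma wp_triangle [CompleteSpace X] [Nonempty X] (hp : 1 ≤ p) (μ κ ν : Measure X) :
    Wp p μ ν ≤ Wp p μ κ + Wp p κ ν := by
  have hp0 : (0:ℝ) < p := lt_of_lt_of_le one_pos hp
  have hip : (0:ℝ) < 1 / p := by positivity
  have key : ∀ π₁ ∈ Adm μ κ, ∀ π₂ ∈ Adm κ ν,
      Wp p μ ν ≤ (∫⁻ z : X × X, edist z.1 z.2 ^ p ∂π₁) ^ (1 / p)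
               + (∫⁻ z : X × X, edist z.1 z.2 ^ p ∂π₂) ^ (1 / p) := by
    intro π₁ h₁ π₂ h₂
    obtain ⟨hP₁, hf₁, hs₁⟩ := h₁
    obtain ⟨hP₂, hf₂, hs₂⟩ := h₂
    haveI := hP₁; haveI := hP₂
    set σ : Measure (X × X) := π₁.map Prod.swap with hσdef
    haveI : IsProbabilityMeasure σ := Measure.isProbabilityMeasure_map measurable_swap.aemeasurable
    haveI : IsProbabilityMeasure κ := hf₂ ▸ Measure.isProbabilityMeasure_map measurable_fst.aemeasurable
    have hσ_fst : σ.fst = κ := by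
      rw [Measure.fst, hσdef, Measure.map_map measurable_fst measurable_swap]
      exact hs₁
    have hσ_snd : σ.snd = μ := by
      rw [Measure.snd, hσdef, Measure.map_map measurable_snd measurable_swap]
      exact hf₁
    have hπ₂_fst : π₂.fst = κ := hf₂
    set m : Measure (X × X × X) := κ ⊗ₘ (σ.condKernel ×ₖ π₂.condKernel) with hm
    have hm₁ : m.map (fun z : X × X × X => (z.1, z.2.1)) = σ := by
      rw [hm, map_compProd_prod_fst, ← hσ_fst]
      exact σ.disintegrate σ.condKernel
    have hm₂ : m.map (fun z : X × X × X => (z.1, z.2.2)) = π₂ := by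
      rw [hm, map_compProd_prod_snd, ← hπ₂_fst]
      exact π₂.disintegrate π₂.condKernel
    have hφ₁ : Measurable (fun z : X × X × X => (z.1, z.2.1)) :=
      measurable_fst.prodMk (measurable_fst.comp measurable_snd)
    have hφ₂ : Measurable (fun z : X × X × X => (z.1, z.2.2)) :=
      measurable_fst.prodMk (measurable_snd.comp measurable_snd)
    haveI : IsProbabilityMeasure m := by
      constructor
      have : m.map (fun z : X × X × X => (z.1, z.2.1)) univ = σ univ := by rw [hm₁]
      rw [Measure.map_apply hφ₁ MeasurableSet.univ, Set.preimage_univ] at this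
      rw [this]
      exact measure_univ
    have hπ_mem : m.map Prod.snd ∈ Adm μ ν := by
      refine ⟨Measure.isProbabilityMeasure_map measurable_snd.aemeasurable, ?_, ?_⟩
      · rw [Measure.map_map measurable_fst measurable_snd, ← hσ_snd, Measure.snd, ← hm₁,
          Measure.map_map measurable_snd hφ₁]
        rfl
      · rw [Measure.map_map measurable_snd measurable_snd, ← hs₂, ← hm₂,
          Measure.map_map measurable_snd hφ₂]
        rfl
    set f : X × X × X → ℝ≥0∞ := fun z => edist z.2.1 z.1 with hfdef
    set g : X × X × X → ℝ≥0∞ := fun z => edist z.1 z.2.2 with hgdef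
    have hfm : Measurable f := ((measurable_fst.comp measurable_snd).edist measurable_fst)
    have hgm : Measurable g := (measurable_fst.edist (measurable_snd.comp measurable_snd))
    have hf_int : ∫⁻ z, f z ^ p ∂m = ∫⁻ z : X × X, edist z.1 z.2 ^ p ∂π₁ := by
      have e1 : ∫⁻ z, f z ^ p ∂m
          = ∫⁻ w : X × X, edist w.2 w.1 ^ p ∂(m.map (fun z : X × X × X => (z.1, z.2.1))) := by
        rw [lintegral_map (((measurable_snd.edist measurable_fst)).pow measurable_const) hφ₁]
      rw [e1, hm₁, hσdef, lintegral_map ((measurable_snd.edist measurable_fst).pow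
        measurable_const) measurable_swap]
      simp
    have hg_int : ∫⁻ z, g z ^ p ∂m = ∫⁻ z : X × X, edist z.1 z.2 ^ p ∂π₂ := by
      have e1 : ∫⁻ z, g z ^ p ∂m
          = ∫⁻ w : X × X, edist w.1 w.2 ^ p ∂(m.map (fun z : X × X × X => (z.1, z.2.2))) := by
        rw [lintegral_map medp hφ₂]
      rw [e1, hm₂]
    calc Wp p μ ν ≤ (∫⁻ z : X × X, edist z.1 z.2 ^ p ∂(m.map Prod.snd)) ^ (1 / p) :=
          wp_le_coupling hp hπ_mem
      _ = (∫⁻ z : X × X × X, edist z.2.1 z.2.2 ^ p ∂m) ^ (1 / p) := by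
          rw [lintegral_map medp measurable_snd]
      _ ≤ (∫⁻ z, (f + g) z ^ p ∂m) ^ (1 / p) := by
          refine ENNReal.rpow_le_rpow (lintegral_mono fun z => ?_) hip.le
          refine ENNReal.rpow_le_rpow ?_ hp0.le
          exact edist_triangle _ _ _
      _ ≤ (∫⁻ z, f z ^ p ∂m) ^ (1 / p) + (∫⁻ z, g z ^ p ∂m) ^ (1 / p) :=
          ENNReal.lintegral_Lp_add_le hfm.aemeasurable hgm.aemeasurable hp
      _ = _ := by rw [hf_int, hg_int]
  calc Wp p μ ν ≤ ⨅ π₁, ⨅ (_ : π₁ ∈ Adm μ κ), ⨅ π₂, ⨅ (_ : π₂ ∈ Adm κ ν),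
        ((∫⁻ z : X × X, edist z.1 z.2 ^ p ∂π₁) ^ (1 / p)
          + (∫⁻ z : X × X, edist z.1 z.2 ^ p ∂π₂) ^ (1 / p)) :=
      le_iInf fun π₁ => le_iInf fun h₁ => le_iInf fun π₂ => le_iInf fun h₂ => key π₁ h₁ π₂ h₂
    _ = Wp p μ κ + Wp p κ ν := by
      rw [Wp, Wp, rpow_iInf' _ hip, rpow_iInf' _ hip]
      simp_rw [rpow_iInf' _ hip, ENNReal.iInf_add, ENNReal.add_iInf]


lemma wp_ne_top (hp : 1 ≤ p) (μ ν : Measure X) [IsProbabilityMeasure μ] [IsProbabilityMeasure ν]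
    (hμ : HasFinitePMoment p μ) (hν : HasFinitePMoment p ν) : Wp p μ ν ≠ ⊤ := by
  have hp0 : (0:ℝ) < p := lt_of_lt_of_le one_pos hp
  have hip : (0:ℝ) ≤ 1 / p := by positivity
  obtain ⟨x₀, hx₀⟩ := hμ
  obtain ⟨x₁, hx₁⟩ := hν
  have hπ : μ.prod ν ∈ Adm μ ν := by
    refine ⟨inferInstance, ?_, ?_⟩
    · rw [Measure.map_fst_prod, measure_univ, one_smul]
    · rw [Measure.map_snd_prod, measure_univ, one_smul]
  set f : X × X → ℝ≥0∞ := fun z => edist z.1 x₀ with hfdef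
  set g : X × X → ℝ≥0∞ := fun z => edist x₀ x₁ with hgdef
  set h : X × X → ℝ≥0∞ := fun z => edist x₁ z.2 with hhdef
  have hfm : Measurable f := measurable_fst.edist measurable_const
  have hgm : Measurable g := measurable_const
  have hhm : Measurable h := measurable_const.edist measurable_snd
  have hmapf : (μ.prod ν).map Prod.fst = μ := by
    rw [Measure.map_fst_prod, measure_univ, one_smul]
  have hmaps : (μ.prod ν).map Prod.snd = ν := by
    rw [Measure.map_snd_prod, measure_univ, one_smul]
  have hf_int : ∫⁻ z, f z ^ p ∂(μ.prod ν) = ∫⁻ x, edist x x₀ ^ p ∂μ := by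
    have h1 := lintegral_map (f := fun x : X => edist x x₀ ^ p) (g := Prod.fst)
      (μ := μ.prod ν) (measurable_edist_left.pow measurable_const) measurable_fst
    rw [hmapf] at h1
    exact h1.symm
  have hh_int : ∫⁻ z, h z ^ p ∂(μ.prod ν) = ∫⁻ y, edist y x₁ ^ p ∂ν := by
    have h1 := lintegral_map (f := fun y : X => edist x₁ y ^ p) (g := Prod.snd)
      (μ := μ.prod ν) (measurable_edist_right.pow measurable_const) measurable_snd
    rw [hmaps] at h1
    calc ∫⁻ z, h z ^ p ∂(μ.prod ν) = ∫⁻ y, edist x₁ y ^ p ∂ν := h1.symm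
      _ = ∫⁻ y, edist y x₁ ^ p ∂ν := by simp_rw [edist_comm]
  have hg_int : ∫⁻ z, g z ^ p ∂(μ.prod ν) = edist x₀ x₁ ^ p := by
    simp only [hgdef]
    rw [lintegral_const, measure_univ, mul_one]
  have bound : Wp p μ ν ≤ (∫⁻ z, f z ^ p ∂(μ.prod ν)) ^ (1/p)
      + ((∫⁻ z, g z ^ p ∂(μ.prod ν)) ^ (1/p) + (∫⁻ z, h z ^ p ∂(μ.prod ν)) ^ (1/p)) := by
    calc Wp p μ ν ≤ (∫⁻ z : X × X, edist z.1 z.2 ^ p ∂(μ.prod ν)) ^ (1 / p) :=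
        wp_le_coupling hp hπ
      _ ≤ (∫⁻ z, (f + (g + h)) z ^ p ∂(μ.prod ν)) ^ (1/p) := by
          refine ENNReal.rpow_le_rpow (lintegral_mono fun z => ?_) hip
          refine ENNReal.rpow_le_rpow ?_ hp0.le
          calc edist z.1 z.2 ≤ edist z.1 x₀ + edist x₀ z.2 := edist_triangle _ _ _
            _ ≤ edist z.1 x₀ + (edist x₀ x₁ + edist x₁ z.2) :=
                add_le_add_right (edist_triangle _ _ _) _
            _ = (f + (g + h)) z := rfl
      _ ≤ (∫⁻ z, f z ^ p ∂(μ.prod ν)) ^ (1/p) + (∫⁻ z, (g + h) z ^ p ∂(μ.prod ν)) ^ (1/p) :=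
          ENNReal.lintegral_Lp_add_le hfm.aemeasurable (hgm.add hhm).aemeasurable hp
      _ ≤ _ := add_le_add_right
          (ENNReal.lintegral_Lp_add_le hgm.aemeasurable hhm.aemeasurable hp) _
  refine ne_top_of_le_ne_top ?_ bound
  refine ENNReal.add_ne_top.mpr ⟨?_, ENNReal.add_ne_top.mpr ⟨?_, ?_⟩⟩
  · rw [hf_int]; exact ENNReal.rpow_ne_top_of_nonneg hip hx₀
  · rw [hg_int]
    exact ENNReal.rpow_ne_top_of_nonneg hip (ENNReal.rpow_ne_top_of_nonneg hp0.le (edist_ne_top _ _))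
  · rw [hh_int]; exact ENNReal.rpow_ne_top_of_nonneg hip hx₁

lemma dp_le_wp (G : Subgroup (X ≃ᵢ X)) (μ ν : Measure X) : Dp G p μ ν ≤ Wp p μ ν := by
  refine iInf_le_of_le 1 (le_of_eq ?_)
  have : (((1 : G) : X ≃ᵢ X) : X → X) = id := by
    rw [OneMemClass.coe_one, IsometryEquiv.coe_one]
  rw [this, Measure.map_id]

lemma dp_comm (hp : 1 ≤ p) (G : Subgroup (X ≃ᵢ X)) (μ ν : Measure X) :
    Dp G p μ ν = Dp G p ν μ := by
  have key : ∀ μ ν : Measure X, Dp G p ν μ ≤ Dp G p μ ν := by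
    intro μ ν
    refine le_iInf fun g => ?_
    refine iInf_le_of_le g⁻¹ (le_of_eq ?_)
    have hcoe : (((g⁻¹ : G) : X ≃ᵢ X) : X → X) = ((g : X ≃ᵢ X).symm : X → X) := by
      rw [InvMemClass.coe_inv]; rfl
    rw [hcoe]
    have step : Wp p ((ν.map ((g : X ≃ᵢ X).symm : X → X)).map ((g : X ≃ᵢ X) : X → X))
        (μ.map ((g : X ≃ᵢ X) : X → X)) = Wp p (ν.map ((g : X ≃ᵢ X).symm : X → X)) μ :=
      wp_map hp (g : X ≃ᵢ X) _ _
    have hcancel : (ν.map ((g : X ≃ᵢ X).symm : X → X)).map ((g : X ≃ᵢ X) : X → X) = ν := by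
      rw [Measure.map_map (g : X ≃ᵢ X).continuous.measurable
        (g : X ≃ᵢ X).symm.continuous.measurable,
        show ((g : X ≃ᵢ X) : X → X) ∘ ((g : X ≃ᵢ X).symm : X → X) = id from
          funext (g : X ≃ᵢ X).apply_symm_apply, Measure.map_id]
    rw [hcancel] at step
    rw [← step, wp_comm hp]
  exact le_antisymm (key ν μ) (key μ ν)


lemma ennreal_one_sub_mul {c : ℝ} (hc : 0 ≤ c) (W : ℝ≥0∞) (hW : W ≠ ⊤) :
    ENNReal.ofReal (1 - c) * W = W - ENNReal.ofReal c * W := by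
  rw [ENNReal.ofReal_sub _ hc, ENNReal.sub_mul (fun _ _ => hW), ENNReal.ofReal_one, one_mul]

end Aux

/-- Let `(μ_t)` be a constant-speed geodesic in the `p`-th Wasserstein space of a Polish
metric space `X` such that `D_p(μ_0,μ_1) = W_p(μ_0,μ_1) ≠ 0`. Then the projected curve is a
constant-speed geodesic for the shape distance:
`D_p(μ_s,μ_t) = |s − t| · D_p(μ_0,μ_1)` for all `s, t ∈ [0,1]`. -/
theorem projection_of_geodesic_is_geodesic {X : Type*} [MetricSpace X] [CompleteSpace X]
    [TopologicalSpace.SeparableSpace X] [MeasurableSpace X] [BorelSpace X]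
    (p : ℝ) (hp : 1 ≤ p) (G : Subgroup (X ≃ᵢ X))
    (μ : ℝ → Measure X)
    (hprob : ∀ t ∈ Icc (0:ℝ) 1, IsProbabilityMeasure (μ t) ∧ HasFinitePMoment p (μ t))
    (hgeo : ∀ s ∈ Icc (0:ℝ) 1, ∀ t ∈ Icc (0:ℝ) 1,
      Wp p (μ s) (μ t) = ENNReal.ofReal |s - t| * Wp p (μ 0) (μ 1))
    (hne : μ 0 ≠ μ 1)
    (hD : Dp G p (μ 0) (μ 1) = Wp p (μ 0) (μ 1))
    (hD0 : Dp G p (μ 0) (μ 1) ≠ 0) :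
    ∀ s ∈ Icc (0:ℝ) 1, ∀ t ∈ Icc (0:ℝ) 1,
      Dp G p (μ s) (μ t) = ENNReal.ofReal |s - t| * Dp G p (μ 0) (μ 1) := by
  haveI : SecondCountableTopology X := UniformSpace.secondCountable_of_separable X
  haveI hP0 : IsProbabilityMeasure (μ 0) := (hprob 0 (by norm_num)).1
  haveI hP1 : IsProbabilityMeasure (μ 1) := (hprob 1 (by norm_num)).1
  haveI : Nonempty X := by
    by_contra hX
    rw [not_nonempty_iff] at hX
    have h1 : (μ 0) univ = 1 := measure_univ
    rw [Set.univ_eq_empty_iff.mpr hX, measure_empty] at h1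
    exact zero_ne_one h1
  have hW : Wp p (μ 0) (μ 1) ≠ ⊤ :=
    wp_ne_top hp (μ 0) (μ 1) (hprob 0 (by norm_num)).2 (hprob 1 (by norm_num)).2
  set W := Wp p (μ 0) (μ 1) with hWdef
  have key : ∀ s ∈ Icc (0:ℝ) 1, ∀ t ∈ Icc (0:ℝ) 1, s ≤ t →
      Dp G p (μ s) (μ t) = ENNReal.ofReal (t - s) * W := by
    intro s hs t ht hst
    have upper : Dp G p (μ s) (μ t) ≤ ENNReal.ofReal (t - s) * W := by
      calc Dp G p (μ s) (μ t) ≤ Wp p (μ s) (μ t) := dp_le_wp G (μ s) (μ t)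
        _ = ENNReal.ofReal |s - t| * W := hgeo s hs t ht
        _ = ENNReal.ofReal (t - s) * W := by rw [abs_sub_comm, abs_of_nonneg (by linarith)]
    have h1 : ∀ g : G, W ≤ ENNReal.ofReal s * W
        + Wp p ((μ s).map ((g : X ≃ᵢ X) : X → X)) (μ t) + ENNReal.ofReal (1 - t) * W := by
      intro g
      have t1 : Wp p ((μ 0).map ((g : X ≃ᵢ X) : X → X)) (μ 1)
          ≤ Wp p ((μ 0).map ((g : X ≃ᵢ X) : X → X)) ((μ s).map ((g : X ≃ᵢ X) : X → X))
            + Wp p ((μ s).map ((g : X ≃ᵢ X) : X → X)) (μ t) + Wp p (μ t) (μ 1) := by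
        calc Wp p ((μ 0).map ((g : X ≃ᵢ X) : X → X)) (μ 1)
            ≤ Wp p ((μ 0).map ((g : X ≃ᵢ X) : X → X)) ((μ s).map ((g : X ≃ᵢ X) : X → X))
              + Wp p ((μ s).map ((g : X ≃ᵢ X) : X → X)) (μ 1) := wp_triangle hp _ _ _
          _ ≤ Wp p ((μ 0).map ((g : X ≃ᵢ X) : X → X)) ((μ s).map ((g : X ≃ᵢ X) : X → X))
              + (Wp p ((μ s).map ((g : X ≃ᵢ X) : X → X)) (μ t) + Wp p (μ t) (μ 1)) :=
              add_le_add_right (wp_triangle hp _ _ _) _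
          _ = _ := by rw [add_assoc]
      have e1 : Wp p ((μ 0).map ((g : X ≃ᵢ X) : X → X)) ((μ s).map ((g : X ≃ᵢ X) : X → X))
          = ENNReal.ofReal s * W := by
        rw [wp_map hp (g : X ≃ᵢ X) (μ 0) (μ s), hgeo 0 (by norm_num) s hs]
        congr 1
        rw [abs_sub_comm, sub_zero, abs_of_nonneg hs.1]
      have e2 : Wp p (μ t) (μ 1) = ENNReal.ofReal (1 - t) * W := by
        rw [hgeo t ht 1 (by norm_num)]
        congr 1
        rw [abs_sub_comm, abs_of_nonneg (by linarith [ht.2])]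
      calc W = Dp G p (μ 0) (μ 1) := hD.symm
        _ ≤ Wp p ((μ 0).map ((g : X ≃ᵢ X) : X → X)) (μ 1) := iInf_le _ g
        _ ≤ _ := by rw [← e1, ← e2]; exact t1
    have h2 : W ≤ ENNReal.ofReal s * W + Dp G p (μ s) (μ t) + ENNReal.ofReal (1 - t) * W := by
      rw [Dp, ENNReal.add_iInf, ENNReal.iInf_add]
      exact le_iInf h1
    have h3 : W ≤ ENNReal.ofReal (s + (1 - t)) * W + Dp G p (μ s) (μ t) := by
      rw [ENNReal.ofReal_add hs.1 (by linarith [ht.2]), add_mul]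
      calc W ≤ ENNReal.ofReal s * W + Dp G p (μ s) (μ t) + ENNReal.ofReal (1 - t) * W := h2
        _ = ENNReal.ofReal s * W + ENNReal.ofReal (1 - t) * W + Dp G p (μ s) (μ t) := by
            rw [add_right_comm]
    have lower : ENNReal.ofReal (t - s) * W ≤ Dp G p (μ s) (μ t) := by
      have h4 : W - ENNReal.ofReal (s + (1 - t)) * W ≤ Dp G p (μ s) (μ t) :=
        tsub_le_iff_left.mpr h3
      have h5 : ENNReal.ofReal (t - s) * W = W - ENNReal.ofReal (s + (1 - t)) * W := by
        rw [show t - s = 1 - (s + (1 - t)) by ring]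
        exact ennreal_one_sub_mul (by linarith [hs.1, ht.2]) W hW
      rw [h5]
      exact h4
    exact le_antisymm upper lower
  intro s hs t ht
  rcases le_total s t with h | h
  · rw [key s hs t ht h, abs_sub_comm, abs_of_nonneg (by linarith), hD]
  · rw [dp_comm hp G (μ s) (μ t), key t ht s hs h, abs_of_nonneg (by linarith), hD]

end
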